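/- Let a, b, c, d ∈ ℂ with c ∉ ℤ_{≤0}, d ∉ ℤ and b − d ∉ ℤ_{≥0}, let z ∈ ℂ with z ≠ 0 be fixed, and let N be a positive integer. Then ₂F₂[a, b−n; c, d−n; z] = Σ_{k=0}^{N−1} ((a)_k (d−b)_k)/((c)_k (d−n)_k) · (−z)^k/k! · ₁F₁[a+k; c+k; z] + O(n^{−N}) as n → +∞ through positive integer values; i.e., there exist C > 0 and n₀ ∈ ℕ such that for all integers n ≥ n₀, the difference between the left-hand side and the finite sum is bounded in modulus by C n^{−N}. -/

import Mathlib

/-- The Pochhammer symbol `(a)_n = a (a+1) ⋯ (a+n-1)`. -/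

noncomputable def poch (a : ℂ) (n : ℕ) : ℂ := ∏ i ∈ Finset.range n, (a + i)

open Finset



lemma poch_zero (a : ℂ) : poch a 0 = 1 := by simp [poch]

lemma poch_succ (a : ℂ) (n : ℕ) : poch a (n+1) = poch a n * (a + n) :=
  Finset.prod_range_succ _ _

lemma poch_succ_left (a : ℂ) (n : ℕ) : poch a (n+1) = a * poch (a+1) n := by
  rw [poch, Finset.prod_range_succ']
  simp only [Nat.cast_zero, add_zero, mul_comm]
  congr 1
  unfold poch
  apply Finset.prod_congr rfl
  intro i _
  push_cast
  ring

lemma poch_add (x : ℂ) (k m : ℕ) : poch x (k+m) = poch x k * poch (x+k) m := by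
  rw [poch, Finset.prod_range_add]
  congr 1
  apply Finset.prod_congr rfl
  intro i _
  push_cast
  ring

lemma poch_ne_zero {x : ℂ} (h : ∀ i : ℕ, x + i ≠ 0) (n : ℕ) : poch x n ≠ 0 :=
  Finset.prod_ne_zero_iff.mpr fun i _ => h i

lemma poch_congr_base {x y : ℂ} (h : x = y) (n : ℕ) : poch x n = poch y n := by rw [h]

/-- Finite Chu–Vandermonde identity (polynomial form). -/
lemma vandermonde_poch (s : ℕ) : ∀ x y : ℂ,
    ∑ k ∈ Finset.range (s+1), ((-1)^k * (s.choose k) : ℂ) * poch x k * poch (y + k) (s - k)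
      = poch (y - x) s := by
  induction s with
  | zero => intro x y; simp [poch]
  | succ s ih =>
    intro x y
    set f : ℕ → ℂ := fun k =>
      ((-1)^k * ((s+1).choose k) : ℂ) * poch x k * poch (y + k) (s+1 - k) with hf
    set g : ℕ → ℂ := fun j =>
      ((-1)^j * (s.choose j) : ℂ) * poch x j * poch (y + j) (s+1 - j) with hg
    set A : ℕ → ℂ := fun k =>
      ((-1)^k * (s.choose k) : ℂ) * poch x (k+1) * poch (y + ((k:ℂ)+1)) (s - k) with hA
    have step1 : ∀ k ∈ Finset.range (s+1), f (k+1) = g (k+1) - A k := by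
      intro k hk
      simp only [hf, hg, hA]
      rw [Nat.choose_succ_succ, show s+1-(k+1) = s-k from by omega]
      push_cast
      ring
    have hf0 : f 0 = g 0 := by simp [hf, hg]
    have step3 : ∑ k ∈ Finset.range (s+1), g (k+1) + g 0 = ∑ j ∈ Finset.range (s+1), g j := by
      rw [← Finset.sum_range_succ' g (s+1), Finset.sum_range_succ g (s+1)]
      simp [hg, Nat.choose_eq_zero_of_lt (Nat.lt_succ_self s)]
    have step4 : ∀ j ∈ Finset.range (s+1), g j - A j
        = (y - x) * (((-1)^j * (s.choose j) : ℂ) * poch x j * poch ((y+1) + j) (s - j)) := by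
      intro j hj
      rw [Finset.mem_range] at hj
      have e1 : poch (y + j) (s+1-j) = (y + j) * poch (y + j + 1) (s - j) := by
        rw [show s+1-j = (s-j)+1 from by omega, poch_succ_left]
      have e2 : poch x (j+1) = poch x j * (x + j) := poch_succ _ _
      have e3 : poch (y + ((j:ℂ)+1)) (s-j) = poch (y + j + 1) (s-j) :=
        poch_congr_base (by ring) _
      have e4 : poch ((y+1) + j) (s-j) = poch (y + j + 1) (s-j) :=
        poch_congr_base (by ring) _
      simp only [hg, hA]
      rw [e1, e2, e3, e4]
      ring
    calc ∑ k ∈ Finset.range (s+1+1), f k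
        = ∑ k ∈ Finset.range (s+1), f (k+1) + f 0 := Finset.sum_range_succ' f (s+1)
      _ = ∑ k ∈ Finset.range (s+1), (g (k+1) - A k) + g 0 := by
          rw [Finset.sum_congr rfl step1, hf0]
      _ = (∑ k ∈ Finset.range (s+1), g (k+1) + g 0) - ∑ k ∈ Finset.range (s+1), A k := by
          rw [Finset.sum_sub_distrib]; ring
      _ = ∑ j ∈ Finset.range (s+1), g j - ∑ j ∈ Finset.range (s+1), A j := by rw [step3]
      _ = ∑ j ∈ Finset.range (s+1), (g j - A j) := (Finset.sum_sub_distrib _ _).symm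
      _ = ∑ j ∈ Finset.range (s+1),
            (y - x) * (((-1)^j * (s.choose j) : ℂ) * poch x j * poch ((y+1) + j) (s - j)) :=
          Finset.sum_congr rfl step4
      _ = (y - x) * ∑ j ∈ Finset.range (s+1),
            ((-1)^j * (s.choose j) : ℂ) * poch x j * poch ((y+1) + j) (s - j) :=
          (Finset.mul_sum _ _ _).symm
      _ = (y - x) * poch ((y+1) - x) s := by rw [ih x (y+1)]
      _ = poch (y - x) (s+1) := by
          rw [poch_succ_left]
          congr 1
          exact poch_congr_base (by ring) _



/-- The complex absolute value, as a bundled absolute value (the norm). -/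
noncomputable def Complex.abs : AbsoluteValue ℂ ℝ :=
  IsAbsoluteValue.toAbsoluteValue (norm : ℂ → ℝ)

lemma Complex.norm_eq_abs (z : ℂ) : ‖z‖ = Complex.abs z := rfl

@[simp]
lemma Complex.abs_natCast (n : ℕ) : Complex.abs (n : ℂ) = n := by
  show ‖(n : ℂ)‖ = _
  simp

lemma Complex.abs_intCast (n : ℤ) : Complex.abs (n : ℂ) = |(n : ℝ)| := by
  show ‖(n : ℂ)‖ = _
  simp

lemma abs_poch_eq (x : ℂ) (n : ℕ) :
    Complex.abs (poch x n) = ∏ i ∈ Finset.range n, Complex.abs (x + i) :=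
  map_prod Complex.abs _ _

lemma abs_poch_le (x : ℂ) (n : ℕ) :
    Complex.abs (poch x n) ≤ (Complex.abs x + 1)^n * n.factorial := by
  rw [abs_poch_eq]
  calc ∏ i ∈ Finset.range n, Complex.abs (x + i)
      ≤ ∏ i ∈ Finset.range n, ((Complex.abs x + 1) * ((i:ℝ)+1)) := by
        apply Finset.prod_le_prod (fun i _ => AbsoluteValue.nonneg _ _)
        intro i _
        have h1 : Complex.abs (x + i) ≤ Complex.abs x + i := by
          have := Complex.abs.add_le x i
          simpa using this
        have h2 : (0:ℝ) ≤ Complex.abs x := AbsoluteValue.nonneg _ _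
        nlinarith [Nat.cast_nonneg (α := ℝ) i]
    _ = (Complex.abs x + 1)^n * n.factorial := by
        rw [Finset.prod_mul_distrib, Finset.prod_const, Finset.card_range]
        congr 1
        rw [← Finset.prod_range_add_one_eq_factorial n]
        push_cast
        rfl

lemma abs_poch_ge_of_eps {x : ℂ} {ε : ℝ} (hε : 0 < ε)
    (h : ∀ i : ℕ, ε * ((i:ℝ)+1) ≤ Complex.abs (x + i)) (n : ℕ) :
    ε^n * n.factorial ≤ Complex.abs (poch x n) := by
  rw [abs_poch_eq]
  calc ε^n * (n.factorial : ℝ) = ∏ i ∈ Finset.range n, (ε * ((i:ℝ)+1)) := by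
        rw [Finset.prod_mul_distrib, Finset.prod_const, Finset.card_range]
        congr 1
        rw [← Finset.prod_range_add_one_eq_factorial n]
        push_cast
        rfl
    _ ≤ ∏ i ∈ Finset.range n, Complex.abs (x + i) := by
        apply Finset.prod_le_prod (fun i _ => by positivity) (fun i _ => h i)

lemma exists_eps_c {c : ℂ} (hc : ∀ m : ℕ, c ≠ -(m : ℂ)) :
    ∃ ε : ℝ, 0 < ε ∧ ∀ i : ℕ, ε * ((i:ℝ)+1) ≤ Complex.abs (c + i) := by
  set M : ℕ := ⌈2 * Complex.abs c⌉₊ + 1 with hM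
  have hne : (Finset.range M).Nonempty := Finset.nonempty_range_iff.mpr (by omega)
  set m0 := (Finset.range M).inf' hne (fun i => Complex.abs (c + i) / ((i:ℝ)+1)) with hm0
  have hmpos : 0 < m0 := by
    rw [hm0, Finset.lt_inf'_iff]
    intro i _
    have hne0 : c + (i:ℂ) ≠ 0 := by
      intro h
      exact hc i (by linear_combination h)
    have := Complex.abs.pos hne0
    positivity
  refine ⟨min (1/2) m0, by positivity, ?_⟩
  intro i
  by_cases hi : i < M
  · have h1 : m0 ≤ Complex.abs (c + i) / ((i:ℝ)+1) :=
      Finset.inf'_le _ (Finset.mem_range.mpr hi)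
    have h2 : min (1/2) m0 * ((i:ℝ)+1) ≤ (Complex.abs (c + i) / ((i:ℝ)+1)) * ((i:ℝ)+1) := by
      apply mul_le_mul_of_nonneg_right (le_trans (min_le_right _ _) h1) (by positivity)
    rwa [div_mul_cancel₀] at h2
    positivity
  · push_neg at hi
    have hcast : (M:ℝ) ≤ (i:ℝ) := Nat.cast_le.mpr hi
    have hceil : 2 * Complex.abs c ≤ (⌈2 * Complex.abs c⌉₊ : ℝ) := Nat.le_ceil _
    have hMr : 2 * Complex.abs c + 1 ≤ (M:ℝ) := by
      rw [hM]; push_cast; linarith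
    have htri : (i:ℝ) ≤ Complex.abs (c + i) + Complex.abs c := by
      have := Complex.abs.add_le (c + i) (-c)
      simpa using this
    have h12 : min (1/2) m0 * ((i:ℝ)+1) ≤ (1/2) * ((i:ℝ)+1) := by
      apply mul_le_mul_of_nonneg_right (min_le_left _ _) (by positivity)
    have : (1/2) * ((i:ℝ)+1) ≤ Complex.abs (c + i) := by linarith
    linarith

lemma exists_eps_d {d : ℂ} (hd : ∀ m : ℤ, d ≠ (m : ℂ)) :
    ∃ ε : ℝ, 0 < ε ∧ ∀ m : ℤ, ε * ((m.natAbs : ℝ)+1) ≤ Complex.abs (d + m) := by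
  set M : ℕ := ⌈2 * Complex.abs d⌉₊ + 1 with hM
  have hne : (Finset.Icc (-(M:ℤ)) (M:ℤ)).Nonempty := ⟨0, by simp⟩
  set m0 := (Finset.Icc (-(M:ℤ)) (M:ℤ)).inf' hne
    (fun m => Complex.abs (d + m) / ((m.natAbs : ℝ)+1)) with hm0
  have hmpos : 0 < m0 := by
    rw [hm0, Finset.lt_inf'_iff]
    intro m _
    have hne0 : d + (m:ℂ) ≠ 0 := by
      intro h
      apply hd (-m)
      push_cast
      linear_combination h
    have := Complex.abs.pos hne0
    positivity
  refine ⟨min (1/2) m0, by positivity, ?_⟩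
  intro m
  by_cases hi : m.natAbs < M
  · have hmem : m ∈ Finset.Icc (-(M:ℤ)) (M:ℤ) := by
      rw [Finset.mem_Icc]
      omega
    have h1 : m0 ≤ Complex.abs (d + m) / ((m.natAbs : ℝ)+1) := Finset.inf'_le _ hmem
    have h2 : min (1/2) m0 * ((m.natAbs : ℝ)+1)
        ≤ (Complex.abs (d + m) / ((m.natAbs : ℝ)+1)) * ((m.natAbs : ℝ)+1) := by
      apply mul_le_mul_of_nonneg_right (le_trans (min_le_right _ _) h1) (by positivity)
    rwa [div_mul_cancel₀] at h2
    positivity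
  · push_neg at hi
    have hcast : (M:ℝ) ≤ (m.natAbs : ℝ) := Nat.cast_le.mpr hi
    have hceil : 2 * Complex.abs d ≤ (⌈2 * Complex.abs d⌉₊ : ℝ) := Nat.le_ceil _
    have hMr : 2 * Complex.abs d + 1 ≤ (M:ℝ) := by
      rw [hM]; push_cast; linarith
    have habs : Complex.abs (m:ℂ) = (m.natAbs : ℝ) := by
      rw [Complex.abs_intCast, Nat.cast_natAbs, Int.cast_abs]
    have htri : (m.natAbs : ℝ) ≤ Complex.abs (d + m) + Complex.abs d := by
      have := Complex.abs.add_le (d + m) (-d)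
      simpa [habs] using this
    have h12 : min (1/2) m0 * ((m.natAbs:ℝ)+1) ≤ (1/2) * ((m.natAbs:ℝ)+1) := by
      apply mul_le_mul_of_nonneg_right (min_le_left _ _) (by positivity)
    have : (1/2) * ((m.natAbs:ℝ)+1) ≤ Complex.abs (d + m) := by linarith
    linarith


/-- `Qnat n k = ∏_{j<k} (|j-n|+1)`. -/
def Qnat (n k : ℕ) : ℕ := ∏ j ∈ Finset.range k, (((j:ℤ) - n).natAbs + 1)

lemma Qnat_pos (n k : ℕ) : 0 < Qnat n k :=
  Finset.prod_pos (fun j _ => Nat.succ_pos _)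

lemma prod_sub_eq_fact (k : ℕ) : ∏ j ∈ Finset.range k, (k - j) = k.factorial := by
  calc ∏ j ∈ Finset.range k, (k - j) = ∏ j ∈ Finset.range k, ((k - 1 - j) + 1) :=
        Finset.prod_congr rfl (fun j hj => by rw [Finset.mem_range] at hj; omega)
    _ = ∏ j ∈ Finset.range k, (j + 1) := Finset.prod_range_reflect (fun j => j + 1) k
    _ = k.factorial := Finset.prod_range_add_one_eq_factorial k

lemma choose_le_two_pow (k n : ℕ) (h : n ≤ k) : k.choose n ≤ 2^k := by
  calc k.choose n ≤ ∑ m ∈ Finset.range (k+1), k.choose m :=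
        Finset.single_le_sum (fun m _ => Nat.zero_le _)
          (Finset.mem_range.mpr (by omega))
    _ = 2^k := Nat.sum_range_choose k

/-- `k! ≤ 2^k * Qnat n k` for all `n, k`. -/
lemma fact_le_Qnat (n k : ℕ) : k.factorial ≤ 2^k * Qnat n k := by
  by_cases hkn : k ≤ n
  · -- Qnat n k = ∏ (n - j + 1) ≥ ∏ (k - j) = k!
    have hQ : Qnat n k = ∏ j ∈ Finset.range k, (n - j + 1) := by
      apply Finset.prod_congr rfl
      intro j hj
      rw [Finset.mem_range] at hj
      omega
    have h1 : k.factorial ≤ Qnat n k := by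
      rw [hQ, ← prod_sub_eq_fact k]
      apply Finset.prod_le_prod'
      intro j hj
      rw [Finset.mem_range] at hj
      omega
    calc k.factorial ≤ Qnat n k := h1
      _ ≤ 2^k * Qnat n k := Nat.le_mul_of_pos_left _ (Nat.pow_pos (by norm_num))
  · push_neg at hkn
    -- k = (n+1) + p
    obtain ⟨p, hp⟩ : ∃ p, k = (n+1) + p := ⟨k - (n+1), by omega⟩
    have hsplit : Qnat n k = (∏ j ∈ Finset.range (n+1), (((j:ℤ) - n).natAbs + 1))
        * ∏ i ∈ Finset.range p, ((((n+1+i:ℕ):ℤ) - n).natAbs + 1) := by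
      rw [Qnat, hp, Finset.prod_range_add]
    have h1 : ∏ j ∈ Finset.range (n+1), (((j:ℤ) - n).natAbs + 1) = (n+1).factorial := by
      have e : ∀ j ∈ Finset.range (n+1), ((j:ℤ) - n).natAbs + 1 = (n+1) - j := by
        intro j hj
        rw [Finset.mem_range] at hj
        omega
      rw [Finset.prod_congr rfl e, prod_sub_eq_fact]
    have h2 : ∏ i ∈ Finset.range p, ((((n+1+i:ℕ):ℤ) - n).natAbs + 1) = (p+1).factorial := by
      have e : ∀ i ∈ Finset.range p, (((n+1+i:ℕ):ℤ) - n).natAbs + 1 = i + 2 := by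
        intro i _
        push_cast
        omega
      rw [Finset.prod_congr rfl e]
      rw [← Finset.prod_range_add_one_eq_factorial (p+1), Finset.prod_range_succ' (fun i => i+1) p]
      simp
    have hQval : Qnat n k = (n+1).factorial * (p+1).factorial := by
      rw [hsplit, h1, h2]
    have hfact : k.factorial = k.choose n * n.factorial * (k - n).factorial :=
      (Nat.choose_mul_factorial_mul_factorial (by omega)).symm
    have hkn' : k - n = p + 1 := by omega
    calc k.factorial = k.choose n * n.factorial * (k-n).factorial := hfact
      _ ≤ 2^k * n.factorial * (k-n).factorial := by
          have := choose_le_two_pow k n (by omega)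
          exact Nat.mul_le_mul_right _ (Nat.mul_le_mul_right _ this)
      _ = 2^k * (n.factorial * (p+1).factorial) := by rw [hkn']; ring
      _ ≤ 2^k * ((n+1).factorial * (p+1).factorial) := by
          apply Nat.mul_le_mul_left
          exact Nat.mul_le_mul_right _ (Nat.factorial_le (by omega))
      _ = 2^k * Qnat n k := by rw [hQval]

/-- Key estimate: `k! * n^N ≤ Qnat n k * (2k)^N * 2^k` for `N ≤ k`. -/
lemma fact_mul_pow_le_Qnat (N n k : ℕ) (hNk : N ≤ k) :
    k.factorial * n^N ≤ Qnat n k * (2*k)^N * 2^k := by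
  by_cases hcase : n ≤ 2*k
  · -- n^N ≤ (2k)^N and k! ≤ 2^k Qnat
    calc k.factorial * n^N ≤ (2^k * Qnat n k) * (2*k)^N :=
          Nat.mul_le_mul (fact_le_Qnat n k) (Nat.pow_le_pow_left hcase N)
      _ = Qnat n k * (2*k)^N * 2^k := by ring
  · push_neg at hcase
    have hkn : k ≤ n := by omega
    have hQ : Qnat n k = ∏ j ∈ Finset.range k, (n - j + 1) := by
      apply Finset.prod_congr rfl
      intro j hj
      rw [Finset.mem_range] at hj
      omega
    -- Qnat ≥ (n+1-N)^N * (k-N)!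
    obtain ⟨p, rfl⟩ : ∃ p, k = N + p := ⟨k - N, by omega⟩
    have hpN : N + p - N = p := by omega
    have hQge : (n+1-N)^N * p.factorial ≤ Qnat n (N+p) := by
      rw [hQ, Finset.prod_range_add]
      apply Nat.mul_le_mul
      · calc (n+1-N)^N = ∏ j ∈ Finset.range N, (n+1-N) := by
              rw [Finset.prod_const, Finset.card_range]
          _ ≤ ∏ j ∈ Finset.range N, (n - j + 1) := by
              apply Finset.prod_le_prod'
              intro j hj
              rw [Finset.mem_range] at hj
              omega
      · calc p.factorial = ∏ i ∈ Finset.range p, (p - i) :=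
              (prod_sub_eq_fact _).symm
          _ ≤ ∏ i ∈ Finset.range p, (n - (N + i) + 1) := by
              apply Finset.prod_le_prod'
              intro i hi
              rw [Finset.mem_range] at hi
              omega
    have h1 : n^N ≤ 2^N * (n+1-N)^N := by
      calc n^N ≤ (2*(n+1-N))^N := Nat.pow_le_pow_left (by omega) N
        _ = 2^N * (n+1-N)^N := Nat.mul_pow 2 _ N
    set k := N + p with hk
    have h2 : k.factorial ≤ k^N * p.factorial := by
      have hd : (k - N).factorial * k.descFactorial N = k.factorial :=
        Nat.factorial_mul_descFactorial hNk
      rw [hpN] at hd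
      calc k.factorial = p.factorial * k.descFactorial N := hd.symm
        _ ≤ p.factorial * k^N :=
            Nat.mul_le_mul_left _ (Nat.descFactorial_le_pow k N)
        _ = k^N * p.factorial := Nat.mul_comm _ _
    calc k.factorial * n^N ≤ (k^N * p.factorial) * (2^N * (n+1-N)^N) :=
          Nat.mul_le_mul h2 h1
      _ = ((n+1-N)^N * p.factorial) * (2^N * k^N) := by ring
      _ ≤ Qnat n k * (2^N * k^N) := Nat.mul_le_mul_right _ hQge
      _ = Qnat n k * (2*k)^N := by rw [Nat.mul_pow]
      _ ≤ Qnat n k * (2*k)^N * 2^k :=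
          Nat.le_mul_of_pos_right _ (Nat.pow_pos (by norm_num))

section Part4

lemma abs_poch_dn {d : ℂ} {ε : ℝ} (hε : 0 < ε)
    (h : ∀ m : ℤ, ε * ((m.natAbs : ℝ)+1) ≤ Complex.abs (d + m)) (n k : ℕ) :
    ε^k * (Qnat n k : ℝ) ≤ Complex.abs (poch (d - n) k) := by
  rw [abs_poch_eq]
  calc ε^k * (Qnat n k : ℝ)
      = ∏ j ∈ Finset.range k, (ε * ((((j:ℤ) - n).natAbs : ℝ) + 1)) := by
        rw [Finset.prod_mul_distrib, Finset.prod_const, Finset.card_range, Qnat]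
        push_cast
        ring
    _ ≤ ∏ j ∈ Finset.range k, Complex.abs (d - n + j) := by
        apply Finset.prod_le_prod
        · intro j _
          have : (0:ℝ) ≤ (((j:ℤ) - n).natAbs : ℝ) := Nat.cast_nonneg _
          nlinarith
        · intro j _
          have e : d - (n:ℂ) + (j:ℕ) = d + (Int.cast ((j:ℤ) - (n:ℤ)) : ℂ) := by push_cast; ring
          rw [e]
          exact h _

end Part4


/-- The confluent hypergeometric function `₁F₁[a; b; z]`. -/
noncomputable def F11 (a b z : ℂ) : ℂ :=
  ∑' n : ℕ, poch a n / poch b n * z ^ n / Nat.factorial n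

/-- The generalized hypergeometric function `₂F₂[a₁, a₂; b₁, b₂; z]`. -/
noncomputable def F22 (a1 a2 b1 b2 z : ℂ) : ℂ :=
  ∑' n : ℕ, poch a1 n * poch a2 n / (poch b1 n * poch b2 n) * z ^ n / Nat.factorial n

set_option maxHeartbeats 1000000 in
/-- Theorem 4.3 of the paper: asymptotic expansion of `₂F₂[a, b−n; c, d−n; z]` as
`n → +∞` through integer values. -/
theorem F22_large_minus_n (a b c d : ℂ)
    (hc : ∀ m : ℕ, c ≠ -(m : ℂ)) (hd : ∀ m : ℤ, d ≠ (m : ℂ))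
    (hbd : ∀ m : ℕ, b - d ≠ (m : ℂ))
    (z : ℂ) (hz : z ≠ 0) (N : ℕ) (hN : 0 < N) :
    ∃ C > (0 : ℝ), ∃ n₀ : ℕ, ∀ n : ℕ, n₀ ≤ n →
      ‖F22 a (b - n) c (d - n) z -
          ∑ k ∈ Finset.range N, poch a k * poch (d - b) k /
            (poch c k * poch (d - n) k) * (-z) ^ k / Nat.factorial k *
            F11 (a + k) (c + k) z‖
        ≤ C * ((n : ℝ) ^ N)⁻¹ := by
  obtain ⟨εc, hεc, hc'⟩ := exists_eps_c hc
  obtain ⟨εd, hεd, hd'⟩ := exists_eps_d hd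
  obtain ⟨Ra, hRa⟩ : ∃ r : ℝ, r = Complex.abs a + 1 := ⟨_, rfl⟩
  obtain ⟨Rdb, hRdb⟩ : ∃ r : ℝ, r = Complex.abs (d - b) + 1 := ⟨_, rfl⟩
  obtain ⟨az, haz⟩ : ∃ r : ℝ, r = Complex.abs z := ⟨_, rfl⟩
  have haz0 : 0 ≤ az := haz ▸ AbsoluteValue.nonneg _ _
  have hRa0 : 0 < Ra := by
    have := AbsoluteValue.nonneg Complex.abs a; rw [hRa]; linarith
  have hRdb0 : 0 < Rdb := by
    have := AbsoluteValue.nonneg Complex.abs (d - b); rw [hRdb]; linarith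
  obtain ⟨E, hE⟩ : ∃ r : ℝ, r = Ra * az / εc := ⟨_, rfl⟩
  obtain ⟨B, hB⟩ : ∃ r : ℝ, r = E * (Rdb / εd) := ⟨_, rfl⟩
  obtain ⟨Y, hY⟩ : ∃ r : ℝ, r = B * 2^(N+1) := ⟨_, rfl⟩
  have hE0 : 0 ≤ E := hE ▸ div_nonneg (mul_nonneg hRa0.le haz0) hεc.le
  have hB0 : 0 ≤ B := hB ▸ mul_nonneg hE0 (div_nonneg hRdb0.le hεd.le)
  have hY0 : 0 ≤ Y := hY ▸ mul_nonneg hB0 (by positivity)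
  -- nonvanishing
  have hcne : ∀ i : ℕ, c + (i:ℂ) ≠ 0 := fun i h => hc i (by linear_combination h)
  have hcpoch : ∀ s, poch c s ≠ 0 := poch_ne_zero hcne
  have hckpoch : ∀ k m : ℕ, poch (c + (k:ℂ)) m ≠ 0 := by
    intro k m
    apply poch_ne_zero
    intro i h
    apply hcne (k + i)
    push_cast at h ⊢
    linear_combination h
  have hdne : ∀ n : ℕ, ∀ i : ℕ, (d - (n:ℂ)) + (i:ℂ) ≠ 0 := by
    intro n i h
    apply hd ((n:ℤ) - (i:ℤ))
    push_cast
    linear_combination h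
  have hdpoch : ∀ n s : ℕ, poch (d - (n:ℂ)) s ≠ 0 := fun n => poch_ne_zero (hdne n)
  -- the double-sum terms
  set w : ℕ → ℕ × ℕ → ℂ := fun n p =>
    (-1)^p.1 * poch a (p.1+p.2) * poch (d - b) p.1 * z^(p.1+p.2) /
      (poch c (p.1+p.2) * poch (d - (n:ℂ)) p.1 *
        ((p.1.factorial : ℂ) * (p.2.factorial : ℂ))) with hwdef
  -- norm bound
  have hw_abs : ∀ n k m : ℕ, Complex.abs (w n (k, m))
      ≤ (E^m / m.factorial) * (B^k / (Qnat n k : ℝ)) := by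
    intro n k m
    have hQpos : (0:ℝ) < (Qnat n k : ℝ) := by exact_mod_cast Qnat_pos n k
    have hfk : (0:ℝ) < (k.factorial : ℝ) := by exact_mod_cast Nat.factorial_pos k
    have hfm : (0:ℝ) < (m.factorial : ℝ) := by exact_mod_cast Nat.factorial_pos m
    have hfkm : (0:ℝ) < ((k+m).factorial : ℝ) := by exact_mod_cast Nat.factorial_pos (k+m)
    have habs : Complex.abs (w n (k,m)) =
        (Complex.abs (poch a (k+m)) * Complex.abs (poch (d-b) k) * az^(k+m)) /
        (Complex.abs (poch c (k+m)) * Complex.abs (poch (d - (n:ℂ)) k) *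
          ((k.factorial : ℝ) * (m.factorial : ℝ))) := by
      rw [hwdef]
      simp only [map_div₀, map_mul, map_pow, map_neg_eq_map, map_one, one_pow, one_mul,
        Complex.abs_natCast, haz]
    rw [habs]
    have hdenpos : (0:ℝ) < (εc^(k+m) * ((k+m).factorial : ℝ)) * (εd^k * (Qnat n k : ℝ)) *
        ((k.factorial : ℝ) * (m.factorial : ℝ)) :=
      mul_pos (mul_pos (mul_pos (pow_pos hεc _) hfkm) (mul_pos (pow_pos hεd _) hQpos))
        (mul_pos hfk hfm)
    have hnum : Complex.abs (poch a (k+m)) * Complex.abs (poch (d-b) k) * az^(k+m)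
        ≤ (Ra^(k+m) * ((k+m).factorial : ℝ)) * (Rdb^k * (k.factorial : ℝ)) * az^(k+m) := by
      apply mul_le_mul_of_nonneg_right _ (pow_nonneg haz0 _)
      apply mul_le_mul (by rw [hRa]; exact abs_poch_le a (k+m))
        (by rw [hRdb]; exact abs_poch_le (d-b) k)
        (AbsoluteValue.nonneg _ _)
      exact mul_nonneg (pow_nonneg hRa0.le _) hfkm.le
    have hden : (εc^(k+m) * ((k+m).factorial : ℝ)) * (εd^k * (Qnat n k : ℝ)) *
          ((k.factorial : ℝ) * (m.factorial : ℝ))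
        ≤ Complex.abs (poch c (k+m)) * Complex.abs (poch (d - (n:ℂ)) k) *
          ((k.factorial : ℝ) * (m.factorial : ℝ)) := by
      apply mul_le_mul_of_nonneg_right _ (mul_nonneg hfk.le hfm.le)
      apply mul_le_mul (abs_poch_ge_of_eps hεc hc' (k+m)) (abs_poch_dn hεd hd' n k)
        (mul_pos (pow_pos hεd _) hQpos).le
        (AbsoluteValue.nonneg _ _)
    calc Complex.abs (poch a (k+m)) * Complex.abs (poch (d-b) k) * az^(k+m) /
          (Complex.abs (poch c (k+m)) * Complex.abs (poch (d - (n:ℂ)) k) *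
            ((k.factorial : ℝ) * (m.factorial : ℝ)))
        ≤ ((Ra^(k+m) * ((k+m).factorial : ℝ)) * (Rdb^k * (k.factorial : ℝ)) * az^(k+m)) /
          ((εc^(k+m) * ((k+m).factorial : ℝ)) * (εd^k * (Qnat n k : ℝ)) *
            ((k.factorial : ℝ) * (m.factorial : ℝ))) := by
          apply div_le_div₀ (by
            apply mul_nonneg (mul_nonneg (mul_nonneg (pow_nonneg hRa0.le _) hfkm.le)
              (mul_nonneg (pow_nonneg hRdb0.le _) hfk.le)) (pow_nonneg haz0 _))
            hnum hdenpos hden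
      _ = (E^m / m.factorial) * (B^k / (Qnat n k : ℝ)) := by
          have eE : E^m = Ra^m * az^m / εc^m := by rw [hE, div_pow, mul_pow]
          have eB : B^k = (Ra * az * Rdb)^k / (εc * εd)^k := by
            rw [hB, hE, div_mul_div_comm, div_pow]
          rw [eE, eB, pow_add Ra, pow_add az, pow_add εc, mul_pow εc εd]
          field_simp
          ring
  -- global majorant
  have hQ1 : ∀ n k : ℕ, B^k / (Qnat n k : ℝ) ≤ Y^k / (k.factorial : ℝ) := by
    intro n k
    have hQpos : (0:ℝ) < (Qnat n k : ℝ) := by exact_mod_cast Qnat_pos n k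
    have hfk : (0:ℝ) < (k.factorial : ℝ) := by exact_mod_cast Nat.factorial_pos k
    have hcast : (k.factorial : ℝ) ≤ 2^k * (Qnat n k : ℝ) := by
      exact_mod_cast fact_le_Qnat n k
    rw [div_le_div_iff₀ hQpos hfk]
    calc B^k * (k.factorial : ℝ) ≤ B^k * (2^k * (Qnat n k : ℝ)) :=
          mul_le_mul_of_nonneg_left hcast (pow_nonneg hB0 k)
      _ = (B*2)^k * (Qnat n k : ℝ) := by rw [mul_pow]; ring
      _ ≤ Y^k * (Qnat n k : ℝ) := by
          apply mul_le_mul_of_nonneg_right _ hQpos.le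
          apply pow_le_pow_left₀ (by linarith)
          rw [hY, pow_succ]
          have h2N : (1:ℝ) ≤ 2^N := one_le_pow₀ (by norm_num)
          nlinarith
  have hw_all : ∀ n : ℕ, ∀ p : ℕ × ℕ, ‖w n p‖ ≤ (Y^p.1 / (p.1.factorial : ℝ)) * (E^p.2 / (p.2.factorial : ℝ)) := by
    intro n p
    rw [Complex.norm_eq_abs]
    calc Complex.abs (w n (p.1, p.2)) ≤ (E^p.2 / p.2.factorial) * (B^p.1 / (Qnat n p.1 : ℝ)) :=
          hw_abs n p.1 p.2
      _ ≤ (E^p.2 / p.2.factorial) * (Y^p.1 / (p.1.factorial : ℝ)) := by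
          apply mul_le_mul_of_nonneg_left (hQ1 n p.1)
            (div_nonneg (pow_nonneg hE0 _) (Nat.cast_nonneg _))
      _ = (Y^p.1 / (p.1.factorial : ℝ)) * (E^p.2 / (p.2.factorial : ℝ)) := mul_comm _ _
  have hMA : Summable (fun p : ℕ × ℕ => (Y^p.1 / (p.1.factorial : ℝ)) * (E^p.2 / (p.2.factorial : ℝ))) := by
    apply Summable.mul_of_nonneg (Real.summable_pow_div_factorial Y)
      (Real.summable_pow_div_factorial E)
    · intro k; exact div_nonneg (pow_nonneg hY0 _) (Nat.cast_nonneg _)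
    · intro m; exact div_nonneg (pow_nonneg hE0 _) (Nat.cast_nonneg _)
  have hwS : ∀ n : ℕ, Summable (w n) := fun n =>
    Summable.of_norm_bounded hMA (hw_all n)
  -- diagonal identity
  have hdiag : ∀ n s : ℕ,
      poch a s * poch (b - (n:ℂ)) s / (poch c s * poch (d - (n:ℂ)) s) * z^s / (s.factorial : ℂ)
      = ∑ k ∈ Finset.range (s+1), w n (k, s-k) := by
    intro n s
    have hD : poch c s * poch (d - (n:ℂ)) s * (s.factorial : ℂ) ≠ 0 :=
      mul_ne_zero (mul_ne_zero (hcpoch s) (hdpoch n s))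
        (Nat.cast_ne_zero.mpr (Nat.factorial_ne_zero s))
    have key : ∀ k ∈ Finset.range (s+1),
        w n (k, s-k) * (poch c s * poch (d - (n:ℂ)) s * (s.factorial : ℂ))
        = poch a s * z^s * (((-1)^k * (s.choose k) : ℂ) * poch (d-b) k *
            poch ((d - (n:ℂ)) + k) (s-k)) := by
      intro k hk
      rw [Finset.mem_range] at hk
      have hks : k + (s - k) = s := by omega
      have e1 : poch (d - (n:ℂ)) s = poch (d - (n:ℂ)) k * poch ((d - (n:ℂ)) + k) (s-k) := by
        have := poch_add (d - (n:ℂ)) k (s-k)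
        rw [hks] at this
        exact this
      have e2 : (s.factorial : ℂ) = (s.choose k : ℂ) * (k.factorial : ℂ) * ((s-k).factorial : ℂ) := by
        exact_mod_cast congrArg (fun t : ℕ => (t : ℂ))
          (Nat.choose_mul_factorial_mul_factorial (by omega : k ≤ s)).symm
      rw [hwdef]
      simp only
      rw [hks, e1, e2]
      have nz1 : poch c s ≠ 0 := hcpoch s
      have nz2 : poch (d - (n:ℂ)) k ≠ 0 := hdpoch n k
      have nz3 : (k.factorial : ℂ) ≠ 0 := Nat.cast_ne_zero.mpr (Nat.factorial_ne_zero k)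
      have nz4 : ((s-k).factorial : ℂ) ≠ 0 := Nat.cast_ne_zero.mpr (Nat.factorial_ne_zero _)
      field_simp
    have hsum : (∑ k ∈ Finset.range (s+1), w n (k, s-k)) *
        (poch c s * poch (d - (n:ℂ)) s * (s.factorial : ℂ))
        = poch a s * poch (b - (n:ℂ)) s * z^s := by
      rw [Finset.sum_mul, Finset.sum_congr rfl key, ← Finset.mul_sum,
        vandermonde_poch s (d-b) (d - (n:ℂ)),
        poch_congr_base (show (d - (n:ℂ)) - (d - b) = b - (n:ℂ) by ring)]
      ring
    rw [eq_div_of_mul_eq hD hsum, div_mul_eq_mul_div, div_div, mul_assoc]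
  -- F22 as double sum
  have hF22 : ∀ n : ℕ, F22 a (b - n) c (d - n) z = ∑' (p : ℕ × ℕ), w n p := by
    intro n
    have hsig : Summable (fun x : (Σ s : ℕ, {p // p ∈ Finset.HasAntidiagonal.antidiagonal s}) =>
        w n (Finset.HasAntidiagonal.sigmaAntidiagonalEquivProd x)) :=
      (Equiv.summable_iff Finset.HasAntidiagonal.sigmaAntidiagonalEquivProd).mpr (hwS n)
    unfold F22
    rw [tsum_congr (hdiag n)]
    rw [← Finset.HasAntidiagonal.sigmaAntidiagonalEquivProd.tsum_eq (w n), Summable.tsum_sigma hsig]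
    apply tsum_congr
    intro s
    have e1 : ∑' (q : {p // p ∈ Finset.HasAntidiagonal.antidiagonal s}),
        w n (Finset.HasAntidiagonal.sigmaAntidiagonalEquivProd ⟨s, q⟩)
        = ∑' (q : {p // p ∈ Finset.HasAntidiagonal.antidiagonal s}), w n q := rfl
    rw [e1, Finset.tsum_subtype (Finset.HasAntidiagonal.antidiagonal s) (w n),
      Finset.Nat.sum_antidiagonal_eq_sum_range_succ_mk]
  -- constants
  obtain ⟨SE, hSE⟩ : ∃ r : ℝ, r = ∑' m : ℕ, E^m / (m.factorial : ℝ) := ⟨_, rfl⟩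
  obtain ⟨SY, hSY⟩ : ∃ r : ℝ, r = ∑' j : ℕ, Y^j / (j.factorial : ℝ) := ⟨_, rfl⟩
  have hSE0 : 0 ≤ SE := hSE ▸ tsum_nonneg
    (fun m => div_nonneg (pow_nonneg hE0 _) (Nat.cast_nonneg _))
  have hSY0 : 0 ≤ SY := hSY ▸ tsum_nonneg
    (fun j => div_nonneg (pow_nonneg hY0 _) (Nat.cast_nonneg _))
  have hC0 : (0:ℝ) < 2^N * SY * SE + 1 := by
    have : (0:ℝ) ≤ 2^N * SY * SE :=
      mul_nonneg (mul_nonneg (by positivity) hSY0) hSE0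
    linarith
  refine ⟨2^N * SY * SE + 1, hC0, 1, ?_⟩
  intro n hn
  have hnR : (1:ℝ) ≤ (n:ℝ) := by exact_mod_cast hn
  have hnpow : (0:ℝ) < (n:ℝ)^N := by positivity
  -- fiberwise sums
  set g : ℕ → ℂ := fun k => ∑' m : ℕ, w n (k, m) with hgdef
  have hfib : ∀ k, HasSum (fun m => w n (k, m)) (g k) := fun k =>
    ((hwS n).prod_factor k).hasSum
  have hgsum : HasSum g (∑' p : ℕ × ℕ, w n p) :=
    HasSum.prod_fiberwise (hwS n).hasSum hfib
  have hgS : Summable g := hgsum.summable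
  have hpartial : ∀ k : ℕ,
      poch a k * poch (d - b) k / (poch c k * poch (d - (n:ℂ)) k) * (-z)^k / (k.factorial : ℂ)
        * F11 (a + k) (c + k) z = g k := by
    intro k
    unfold F11
    rw [← tsum_mul_left]
    apply tsum_congr
    intro m
    rw [hwdef]
    simp only
    rw [poch_add a k m, poch_add c k m]
    have nz1 : poch c k ≠ 0 := hcpoch k
    have nz2 : poch (c + (k:ℂ)) m ≠ 0 := hckpoch k m
    have nz3 : poch (d - (n:ℂ)) k ≠ 0 := hdpoch n k
    have nz4 : (k.factorial : ℂ) ≠ 0 := Nat.cast_ne_zero.mpr (Nat.factorial_ne_zero k)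
    have nz5 : (m.factorial : ℂ) ≠ 0 := Nat.cast_ne_zero.mpr (Nat.factorial_ne_zero m)
    field_simp
    ring
  rw [hF22 n, ← hgsum.tsum_eq, Finset.sum_congr rfl (fun k _ => hpartial k)]
  have hsplit : (∑' k : ℕ, g k) - ∑ k ∈ Finset.range N, g k = ∑' i : ℕ, g (i + N) := by
    rw [← Summable.sum_add_tsum_nat_add N hgS]
    ring
  rw [hsplit]
  -- the tail bound
  have hQ2 : ∀ j : ℕ, N ≤ j → B^j / (Qnat n j : ℝ) ≤ 2^N * Y^j / ((j.factorial : ℝ) * (n:ℝ)^N) := by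
    intro j hj
    have hQpos : (0:ℝ) < (Qnat n j : ℝ) := by exact_mod_cast Qnat_pos n j
    have hfj : (0:ℝ) < (j.factorial : ℝ) := by exact_mod_cast Nat.factorial_pos j
    have hcast : (j.factorial : ℝ) * (n:ℝ)^N ≤ (Qnat n j : ℝ) * (2*(j:ℝ))^N * 2^j := by
      exact_mod_cast fact_mul_pow_le_Qnat N n j hj
    rw [div_le_div_iff₀ hQpos (mul_pos hfj hnpow)]
    have h1 : B^j * ((j.factorial : ℝ) * (n:ℝ)^N) ≤ B^j * ((Qnat n j : ℝ) * (2*(j:ℝ))^N * 2^j) :=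
      mul_le_mul_of_nonneg_left hcast (pow_nonneg hB0 j)
    have hjle : ((j:ℝ))^N ≤ ((2:ℝ)^N)^j := by
      calc ((j:ℝ))^N ≤ ((2:ℝ)^j)^N := by
            apply pow_le_pow_left₀ (Nat.cast_nonneg j)
            exact_mod_cast (Nat.lt_two_pow_self).le
        _ = ((2:ℝ)^N)^j := by rw [← pow_mul, ← pow_mul, Nat.mul_comm]
    have h2 : B^j * ((2*(j:ℝ))^N * 2^j) ≤ 2^N * Y^j := by
      calc B^j * ((2*(j:ℝ))^N * 2^j) = 2^N * (B^j * ((j:ℝ))^N * 2^j) := by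
            rw [mul_pow]; ring
        _ ≤ 2^N * (B^j * ((2:ℝ)^N)^j * 2^j) := by
            apply mul_le_mul_of_nonneg_left _ (by positivity)
            apply mul_le_mul_of_nonneg_right _ (by positivity)
            exact mul_le_mul_of_nonneg_left hjle (pow_nonneg hB0 j)
        _ = 2^N * Y^j := by rw [hY]; ring
    calc B^j * ((j.factorial : ℝ) * (n:ℝ)^N)
        ≤ B^j * ((Qnat n j : ℝ) * (2*(j:ℝ))^N * 2^j) := h1
      _ = (B^j * ((2*(j:ℝ))^N * 2^j)) * (Qnat n j : ℝ) := by ring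
      _ ≤ (2^N * Y^j) * (Qnat n j : ℝ) := mul_le_mul_of_nonneg_right h2 hQpos.le
  have hnormm : ∀ j : ℕ, Summable (fun m => ‖w n (j, m)‖) := by
    intro j
    apply Summable.of_nonneg_of_le (fun m => norm_nonneg _)
      (fun m => hw_all n (j, m))
    exact (Real.summable_pow_div_factorial E).mul_left (Y^j / (j.factorial : ℝ))
  have hgb : ∀ j : ℕ, N ≤ j → ‖g j‖ ≤ (2^N * SE) * (Y^j / (j.factorial : ℝ)) * ((n:ℝ)^N)⁻¹ := by
    intro j hj
    have hfj : (0:ℝ) < (j.factorial : ℝ) := by exact_mod_cast Nat.factorial_pos j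
    calc ‖g j‖ ≤ ∑' m : ℕ, ‖w n (j, m)‖ := norm_tsum_le_tsum_norm (hnormm j)
      _ ≤ ∑' m : ℕ, (E^m / (m.factorial : ℝ)) * (2^N * Y^j / ((j.factorial : ℝ) * (n:ℝ)^N)) := by
          apply Summable.tsum_le_tsum _ (hnormm j)
            ((Real.summable_pow_div_factorial E).mul_right _)
          intro m
          rw [Complex.norm_eq_abs]
          calc Complex.abs (w n (j, m)) ≤ (E^m / m.factorial) * (B^j / (Qnat n j : ℝ)) :=
                hw_abs n j m
            _ ≤ (E^m / (m.factorial : ℝ)) * (2^N * Y^j / ((j.factorial : ℝ) * (n:ℝ)^N)) :=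
                mul_le_mul_of_nonneg_left (hQ2 j hj)
                  (div_nonneg (pow_nonneg hE0 _) (Nat.cast_nonneg _))
      _ = SE * (2^N * Y^j / ((j.factorial : ℝ) * (n:ℝ)^N)) := by rw [tsum_mul_right, ← hSE]
      _ = (2^N * SE) * (Y^j / (j.factorial : ℝ)) * ((n:ℝ)^N)⁻¹ := by
          field_simp
  have hmajS : Summable (fun i : ℕ =>
      (2^N * SE) * (Y^(i+N) / ((i+N).factorial : ℝ)) * ((n:ℝ)^N)⁻¹) := by
    apply Summable.mul_right
    apply Summable.mul_left
    exact (summable_nat_add_iff N).mpr (Real.summable_pow_div_factorial Y)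
  have hnormS : Summable (fun i : ℕ => ‖g (i + N)‖) :=
    Summable.of_nonneg_of_le (fun _ => norm_nonneg _)
      (fun i => hgb (i+N) (Nat.le_add_left N i)) hmajS
  have hshift : (∑' i : ℕ, Y^(i+N) / ((i+N).factorial : ℝ)) ≤ SY := by
    have h := Summable.sum_add_tsum_nat_add (f := fun j => Y^j / (j.factorial : ℝ)) N
      (Real.summable_pow_div_factorial Y)
    have hp : 0 ≤ ∑ i ∈ Finset.range N, Y^i / (i.factorial : ℝ) :=
      Finset.sum_nonneg (fun i _ => by positivity)
    rw [hSY]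
    linarith
  calc ‖∑' i : ℕ, g (i + N)‖ ≤ ∑' i : ℕ, ‖g (i + N)‖ := norm_tsum_le_tsum_norm hnormS
    _ ≤ ∑' i : ℕ, (2^N * SE) * (Y^(i+N) / ((i+N).factorial : ℝ)) * ((n:ℝ)^N)⁻¹ :=
        Summable.tsum_le_tsum (fun i => hgb (i+N) (Nat.le_add_left N i)) hnormS hmajS
    _ = (2^N * SE) * (∑' i : ℕ, Y^(i+N) / ((i+N).factorial : ℝ)) * ((n:ℝ)^N)⁻¹ := by
        rw [tsum_mul_right, tsum_mul_left]
    _ ≤ (2^N * SE) * SY * ((n:ℝ)^N)⁻¹ := by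
        apply mul_le_mul_of_nonneg_right _ (by positivity)
        exact mul_le_mul_of_nonneg_left hshift
          (mul_nonneg (by positivity) hSE0)
    _ ≤ (2^N * SY * SE + 1) * ((n:ℝ)^N)⁻¹ := by
        apply mul_le_mul_of_nonneg_right _ (by positivity)
        nlinarith
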